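/- Let E be a real inner product space, let r_t : E → ℝ (for integers t, with r_s ≡ 0 for s ≤ 0) be differentiable functions, and let w ≥ 1, T ≥ 1 be integers, δ ≥ 0, and M ≥ 0. Define u_{w,t}(θ) = (1/w) · Σ_{i=0}^{w-1} r_{t-i}(θ). Suppose ‖∇r_t(θ)‖ ≤ M for all θ ∈ E and all t ≥ 1, and suppose θ_1,…,θ_T ∈ E satisfy ‖∇u_{w,t-1}(θ_t)‖ ≤ δ for every t ∈ {1,…,T}. Then (1/T) · Σ_{t=1}^T ‖∇u_{w,t}(θ_t)‖² ≤ 2δ² + 8M²/w². -/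

import Mathlib

open Finset

lemma gradient_u_eq
    {E : Type*} [NormedAddCommGroup E] [InnerProductSpace ℝ E] [CompleteSpace E]
    (r : ℤ → E → ℝ) (hrdiff : ∀ t : ℤ, Differentiable ℝ (r t))
    (w : ℕ) (u : ℤ → E → ℝ)
    (hu : ∀ (t : ℤ) (θ : E),
      u t θ = (1 / (w : ℝ)) * ∑ i ∈ Finset.range w, r (t - i) θ)
    (t : ℤ) (x : E) :
    gradient (u t) x
      = (1 / (w : ℝ)) • ∑ i ∈ Finset.range w, gradient (r (t - i)) x := by
  have h : HasGradientAt (u t)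
      ((1 / (w : ℝ)) • ∑ i ∈ Finset.range w, gradient (r (t - i)) x) x := by
    rw [hasGradientAt_iff_hasFDerivAt]
    have hfd : HasFDerivAt (fun θ => ∑ i ∈ Finset.range w, r (t - i) θ)
        (∑ i ∈ Finset.range w,
          (InnerProductSpace.toDual ℝ E) (gradient (r (t - i)) x)) x := by
      apply HasFDerivAt.fun_sum
      intro i _
      exact ((hrdiff (t - i)) x).hasGradientAt.hasFDerivAt
    have := hfd.const_smul ((1 : ℝ) / w)
    have heq : (fun θ => ∑ i ∈ Finset.range w, r (t - i) θ) =
        (fun θ => ∑ i ∈ Finset.range w, r (t - i) θ) := rfl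
    convert this.congr_of_eventuallyEq ?_ using 1
    · rfl
    · rfl
    · simp [map_smul, map_sum]
    · filter_upwards with y
      rw [hu t y]
      simp [smul_eq_mul]
  exact h.gradient

/-- Worst-case corollary of **Proposition 1**: under uniformly bounded gradients,
Batch Update achieves average `w`-local regret at most `2δ² + 8M²/w²`. -/
theorem batch_update_regret_minimax
    {E : Type*} [NormedAddCommGroup E] [InnerProductSpace ℝ E] [CompleteSpace E]
    (r : ℤ → E → ℝ) (hrdiff : ∀ t : ℤ, Differentiable ℝ (r t))
    (hr0 : ∀ s : ℤ, s ≤ 0 → r s = 0)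
    (w T : ℕ) (hw : 1 ≤ w) (hT : 1 ≤ T)
    (δ : ℝ) (hδ : 0 ≤ δ) (M : ℝ) (hM : 0 ≤ M)
    (hgrad : ∀ t : ℤ, 1 ≤ t → ∀ θ : E, ‖gradient (r t) θ‖ ≤ M)
    (u : ℤ → E → ℝ)
    (hu : ∀ (t : ℤ) (θ : E),
      u t θ = (1 / (w : ℝ)) * ∑ i ∈ Finset.range w, r (t - i) θ)
    (θ : ℤ → E)
    (hterm : ∀ t ∈ Finset.Icc (1 : ℤ) (T : ℤ),
      ‖gradient (u (t - 1)) (θ t)‖ ≤ δ) :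
    (1 / (T : ℝ)) * ∑ t ∈ Finset.Icc (1 : ℤ) (T : ℤ), ‖gradient (u t) (θ t)‖ ^ 2
      ≤ 2 * δ ^ 2 + 8 * M ^ 2 / (w : ℝ) ^ 2 := by
  have hwpos : (0 : ℝ) < w := by exact_mod_cast hw
  have hTpos : (0 : ℝ) < T := by exact_mod_cast hT
  -- per-term bound
  have key : ∀ t ∈ Finset.Icc (1 : ℤ) (T : ℤ),
      ‖gradient (u t) (θ t)‖ ^ 2 ≤ 2 * δ ^ 2 + 8 * M ^ 2 / (w : ℝ) ^ 2 := by
    intro t ht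
    obtain ⟨ht1, htT⟩ := Finset.mem_Icc.mp ht
    set x := θ t
    have hdiff : gradient (u t) x - gradient (u (t - 1)) x
        = (1 / (w : ℝ)) • (gradient (r t) x - gradient (r (t - w)) x) := by
      rw [gradient_u_eq r hrdiff w u hu t x, gradient_u_eq r hrdiff w u hu (t - 1) x,
        ← smul_sub, ← Finset.sum_sub_distrib]
      congr 1
      have : ∀ i ∈ Finset.range w,
          gradient (r (t - i)) x - gradient (r (t - 1 - i)) x
            = (fun i : ℕ => gradient (r (t - i)) x) i
              - (fun i : ℕ => gradient (r (t - i)) x) (i + 1) := by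
        intro i _
        simp only []
        congr 2
        push_cast
        ring
      rw [Finset.sum_congr rfl this, Finset.sum_range_sub']
      norm_num
    have hgt : ‖gradient (r t) x‖ ≤ M := hgrad t ht1 x
    have hgtw : ‖gradient (r (t - w)) x‖ ≤ M := by
      rcases le_or_gt (t - w) 0 with h | h
      · rw [hr0 _ h]
        have : gradient (0 : E → ℝ) x = 0 := by
          have := (hasGradientAt_const x (0 : ℝ)).gradient
          simpa [Pi.zero_def] using this
        rw [this]; simpa using hM
      · exact hgrad _ h x
    have hbound : ‖gradient (u t) x‖ ≤ δ + 2 * M / w := by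
      calc ‖gradient (u t) x‖
          ≤ ‖gradient (u (t - 1)) x‖ + ‖gradient (u t) x - gradient (u (t - 1)) x‖ := by
            have := norm_add_le (gradient (u (t - 1)) x)
              (gradient (u t) x - gradient (u (t - 1)) x)
            simpa using this
        _ ≤ δ + 2 * M / w := by
            apply add_le_add (hterm t ht)
            rw [hdiff, norm_smul]
            have : ‖gradient (r t) x - gradient (r (t - w)) x‖ ≤ 2 * M := by
              calc _ ≤ ‖gradient (r t) x‖ + ‖gradient (r (t - w)) x‖ := norm_sub_le _ _
                _ ≤ 2 * M := by linarith
            have h1 : ‖(1 : ℝ) / w‖ = 1 / (w : ℝ) := by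
              rw [Real.norm_eq_abs, abs_of_pos (by positivity)]
            rw [h1]
            calc (1 : ℝ) / w * ‖gradient (r t) x - gradient (r (t - w)) x‖
                ≤ 1 / w * (2 * M) :=
                  mul_le_mul_of_nonneg_left this (by positivity)
              _ = 2 * M / w := by ring
    have hnn : (0 : ℝ) ≤ ‖gradient (u t) x‖ := norm_nonneg _
    have hrw : 8 * M ^ 2 / (w : ℝ) ^ 2 = 2 * (2 * M / w) ^ 2 := by
      field_simp; ring
    rw [hrw]
    nlinarith [sq_nonneg (δ - 2 * M / w),
      mul_le_mul hbound hbound hnn (by positivity : (0:ℝ) ≤ δ + 2 * M / w)]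
  have hsum : ∑ t ∈ Finset.Icc (1 : ℤ) (T : ℤ), ‖gradient (u t) (θ t)‖ ^ 2
      ≤ (T : ℝ) * (2 * δ ^ 2 + 8 * M ^ 2 / (w : ℝ) ^ 2) := by
    have hcard : (Finset.Icc (1 : ℤ) (T : ℤ)).card = T := by
      rw [Int.card_Icc]; simp
    calc _ ≤ ∑ _t ∈ Finset.Icc (1 : ℤ) (T : ℤ), (2 * δ ^ 2 + 8 * M ^ 2 / (w : ℝ) ^ 2) :=
          Finset.sum_le_sum key
      _ = (T : ℝ) * (2 * δ ^ 2 + 8 * M ^ 2 / (w : ℝ) ^ 2) := by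
          rw [Finset.sum_const, hcard, nsmul_eq_mul]
  rw [div_mul_eq_mul_div, one_mul, div_le_iff₀ hTpos, mul_comm]
  exact hsum
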